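/- For a single strictly positive integer observation x_1 ≥ 1 from a k-component Poisson mixture reparameterised by component means λ_i = λγ_i/p_i, with improper prior π(λ) = 1/λ on λ > 0 and proper independent priors on (γ, p), the marginal likelihood equals Σ_{i=1}^k ∫ (p_i/x_1) π(γ,p) d(γ,p), which is finite; hence the posterior is proper. -/

import Mathlib

open MeasureTheory Finset

lemma poisson_term_eq (a c : ℝ) (n : ℕ) (hn : 1 ≤ n) {l : ℝ} (hl : 0 < l) :
    c * Real.exp (-(l * a)) * (l * a) ^ n / (Nat.factorial n : ℝ) * l⁻¹
      = c * a ^ n / (Nat.factorial n : ℝ) * (l ^ ((n:ℝ) - 1) * Real.exp (-a * l ^ (1:ℝ))) := by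
  have hcast : ((n:ℝ) - 1) = ((n - 1 : ℕ) : ℝ) := by
    rw [Nat.cast_sub hn]; norm_num
  rw [Real.rpow_one, hcast, Real.rpow_natCast, neg_mul, mul_comm a l]
  obtain ⟨m, rfl⟩ := Nat.exists_eq_add_of_le hn
  simp only [Nat.add_sub_cancel_left]
  have hfac : ((Nat.factorial (1 + m) : ℝ)) ≠ 0 := by positivity
  field_simp
  ring

lemma poisson_key (a c : ℝ) (ha : 0 < a) (hc : 0 ≤ c) (n : ℕ) (hn : 1 ≤ n) :
    ∫⁻ l in Set.Ioi (0:ℝ),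
      ENNReal.ofReal (c * Real.exp (-(l * a)) * (l * a) ^ n / (Nat.factorial n : ℝ) * l⁻¹)
      = ENNReal.ofReal (c / n) := by
  have hn' : (1:ℝ) ≤ (n:ℝ) := by exact_mod_cast hn
  have hint : IntegrableOn (fun x : ℝ => x ^ ((n:ℝ) - 1) * Real.exp (-a * x ^ (1:ℝ)))
      (Set.Ioi 0) := integrableOn_rpow_mul_exp_neg_mul_rpow (by linarith) one_pos ha
  have hint2 : IntegrableOn
      (fun x : ℝ => c * a ^ n / (Nat.factorial n : ℝ) * (x ^ ((n:ℝ)-1) * Real.exp (-a * x ^ (1:ℝ))))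
      (Set.Ioi 0) := hint.const_mul _
  have hint' : IntegrableOn
      (fun l : ℝ => c * Real.exp (-(l * a)) * (l * a) ^ n / (Nat.factorial n : ℝ) * l⁻¹)
      (Set.Ioi 0) :=
    hint2.congr_fun (fun l hl => (poisson_term_eq a c n hn hl).symm) measurableSet_Ioi
  rw [← ofReal_integral_eq_lintegral_ofReal hint' ?_]
  · congr 1
    rw [setIntegral_congr_fun measurableSet_Ioi
        (fun l hl => poisson_term_eq a c n hn hl)]
    rw [integral_const_mul]
    have hG : ∫ x in Set.Ioi (0:ℝ), x ^ ((n:ℝ)-1) * Real.exp (-a * x ^ (1:ℝ))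
        = (1/a) ^ (n:ℝ) * Real.Gamma n := by
      rw [← Real.integral_rpow_mul_exp_neg_mul_Ioi (by linarith : (0:ℝ) < (n:ℝ)) ha]
      refine setIntegral_congr_fun measurableSet_Ioi (fun x hx => ?_)
      rw [Real.rpow_one, neg_mul]
    rw [hG, Real.rpow_natCast]
    obtain ⟨m, rfl⟩ := Nat.exists_eq_add_of_le hn
    have : ((1 + m : ℕ) : ℝ) = (m : ℝ) + 1 := by push_cast; ring
    rw [this, Real.Gamma_nat_eq_factorial]
    have hfac : ((Nat.factorial (1 + m) : ℝ)) ≠ 0 := by positivity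
    have hfac' : ((Nat.factorial m : ℝ)) ≠ 0 := by positivity
    have hrec : ((Nat.factorial (1 + m) : ℝ)) = ((m:ℝ) + 1) * (Nat.factorial m : ℝ) := by
      rw [Nat.add_comm, Nat.factorial_succ]; push_cast; ring
    have hm1 : (m:ℝ) + 1 ≠ 0 := by positivity
    field_simp [hrec]
    rw [hrec]
    have h1 : a * a⁻¹ = 1 := mul_inv_cancel₀ ha.ne'
    have h2 : a ^ m * a⁻¹ ^ m = 1 := by rw [← mul_pow, h1, one_pow]
    linear_combination (c * (Nat.factorial m : ℝ) * ((m:ℝ) + 1)) * (a ^ m * a⁻¹ ^ m * h1 + h2)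
  · filter_upwards [self_mem_ae_restrict measurableSet_Ioi] with l hl
    have hl0 : (0:ℝ) < l := hl
    positivity

/-- For a single strictly positive integer observation `x₁ ≥ 1` from a `k`-component Poisson
mixture with component means `λ γ i / p i`, improper prior `π(λ) = 1/λ` and proper prior `Q`
on `(γ, p)`, the marginal likelihood equals `∫ (∑ i, p i / x₁) dQ` and is finite: the
posterior is proper. -/
theorem poisson_mixture_posterior_proper
    {Θ : Type*} [MeasurableSpace Θ] (Q : Measure Θ) [IsProbabilityMeasure Q] (k : ℕ)
    (γ p : Θ → Fin k → ℝ)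
    (hγ : ∀ θ i, 0 < γ θ i) (hγsum : ∀ θ, ∑ i, γ θ i = 1)
    (hp : ∀ θ i, 0 < p θ i) (hpsum : ∀ θ, ∑ i, p θ i = 1)
    (x₁ : ℕ) (hx : 1 ≤ x₁) :
    (∫⁻ θ, ∫⁻ l in Set.Ioi (0 : ℝ),
        ENNReal.ofReal
          ((∑ i, p θ i * Real.exp (-(l * γ θ i / p θ i)) *
              (l * γ θ i / p θ i) ^ x₁ / (Nat.factorial x₁ : ℝ)) * l⁻¹)
      ∂volume ∂Q)
      = ∫⁻ θ, ENNReal.ofReal (∑ i, p θ i / (x₁ : ℝ)) ∂Q ∧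
    (∫⁻ θ, ∫⁻ l in Set.Ioi (0 : ℝ),
        ENNReal.ofReal
          ((∑ i, p θ i * Real.exp (-(l * γ θ i / p θ i)) *
              (l * γ θ i / p θ i) ^ x₁ / (Nat.factorial x₁ : ℝ)) * l⁻¹)
      ∂volume ∂Q) < ⊤ := by
  have hinner : ∀ θ, (∫⁻ l in Set.Ioi (0 : ℝ),
      ENNReal.ofReal
        ((∑ i, p θ i * Real.exp (-(l * γ θ i / p θ i)) *
            (l * γ θ i / p θ i) ^ x₁ / (Nat.factorial x₁ : ℝ)) * l⁻¹)
      ∂volume) = ENNReal.ofReal (∑ i, p θ i / (x₁ : ℝ)) := by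
    intro θ
    have hstep : ∀ l ∈ Set.Ioi (0:ℝ),
        ENNReal.ofReal
          ((∑ i, p θ i * Real.exp (-(l * γ θ i / p θ i)) *
              (l * γ θ i / p θ i) ^ x₁ / (Nat.factorial x₁ : ℝ)) * l⁻¹)
        = ∑ i, ENNReal.ofReal
            (p θ i * Real.exp (-(l * (γ θ i / p θ i))) *
              (l * (γ θ i / p θ i)) ^ x₁ / (Nat.factorial x₁ : ℝ) * l⁻¹) := by
      intro l hl
      have hl0 : (0:ℝ) < l := hl
      rw [Finset.sum_mul, ENNReal.ofReal_sum_of_nonneg]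
      · refine Finset.sum_congr rfl (fun i _ => ?_)
        rw [mul_div_assoc l (γ θ i) (p θ i)]
      · intro i _
        have h1 : 0 < p θ i := hp θ i
        have h2 : 0 < γ θ i := hγ θ i
        positivity
    rw [setLIntegral_congr_fun measurableSet_Ioi
        hstep]
    rw [lintegral_finset_sum]
    · have : ∀ i : Fin k, (∫⁻ l in Set.Ioi (0:ℝ),
          ENNReal.ofReal
            (p θ i * Real.exp (-(l * (γ θ i / p θ i))) *
              (l * (γ θ i / p θ i)) ^ x₁ / (Nat.factorial x₁ : ℝ) * l⁻¹)) =
          ENNReal.ofReal (p θ i / (x₁ : ℝ)) := fun i =>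
        poisson_key (γ θ i / p θ i) (p θ i) (div_pos (hγ θ i) (hp θ i)) (hp θ i).le x₁ hx
      rw [Finset.sum_congr rfl (fun i _ => this i)]
      rw [← ENNReal.ofReal_sum_of_nonneg]
      intro i _
      have h1 : 0 < p θ i := hp θ i
      have h2 : (0:ℝ) < x₁ := by exact_mod_cast hx
      positivity
    · intro i _
      apply Measurable.ennreal_ofReal
      fun_prop
  constructor
  · exact lintegral_congr hinner
  · rw [lintegral_congr hinner]
    calc (∫⁻ θ, ENNReal.ofReal (∑ i, p θ i / (x₁ : ℝ)) ∂Q)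
        ≤ ∫⁻ _, 1 ∂Q := by
          refine lintegral_mono (fun θ => ?_)
          have hle : (∑ i, p θ i / (x₁ : ℝ)) ≤ 1 := by
            have h2 : (1:ℝ) ≤ (x₁:ℝ) := by exact_mod_cast hx
            calc (∑ i, p θ i / (x₁ : ℝ)) ≤ ∑ i, p θ i := by
                  refine Finset.sum_le_sum (fun i _ => ?_)
                  have := (hp θ i).le
                  rw [div_le_iff₀ (by linarith)]
                  nlinarith
              _ = 1 := hpsum θ
          calc ENNReal.ofReal (∑ i, p θ i / (x₁ : ℝ)) ≤ ENNReal.ofReal 1 :=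
                ENNReal.ofReal_le_ofReal hle
            _ = 1 := ENNReal.ofReal_one
      _ < ⊤ := by simp
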